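/- Let A be an affine hyperplane arrangement. Then every modular ideal of L(A) is graded, i.e., all maximal elements of a modular ideal have the same rank. -/

import Mathlib

open Polynomial
open scoped Classical Pointwise

namespace HypArr

variable {K V : Type*} [Field K] [AddCommGroup V] [Module K V] [FiniteDimensional K V]

/-- `A` is an affine hyperplane arrangement: a finite set of affine hyperplanes,
i.e. nonempty affine subspaces of codimension one. -/
def IsArrangement (A : Finset (AffineSubspace K V)) : Prop :=
  ∀ H ∈ A, H ≠ ⊥ ∧ Module.finrank K V = Module.finrank K H.direction + 1

/-- The intersection poset `L(A)`: all nonempty intersections of subfamilies of `A`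
(the empty intersection being the whole space `⊤`).  The order of `L(A)` is *reverse*
inclusion, so `X ≤ Y` in `L(A)` corresponds to `Y ≤ X` as affine subspaces; the
minimal element `0̂` of `L(A)` is the whole space `⊤`. -/
noncomputable def poset (A : Finset (AffineSubspace K V)) : Finset (AffineSubspace K V) :=
  (A.powerset.image fun S => S.inf id).filter (· ≠ ⊥)

/-- The rank of an element of `L(A)`: its codimension in `V`. -/
noncomputable def rk (X : AffineSubspace K V) : ℕ :=
  Module.finrank K V - Module.finrank K X.direction

/-- The rank `r(A)` of the arrangement: the maximal rank of an element of `L(A)`. -/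
noncomputable def rank (A : Finset (AffineSubspace K V)) : ℕ := (poset A).sup rk

/-- An ideal of `L(A)` (with respect to the reverse-inclusion order of `L(A)`):
a downward closed subset of `L(A)`. -/
def IsIdeal (A I : Finset (AffineSubspace K V)) : Prop :=
  I ⊆ poset A ∧ ∀ X ∈ I, ∀ Y ∈ poset A, X ≤ Y → Y ∈ I

/-- The principal ideal `⟨X⟩ = {Y ∈ L(A) : Y ≤ X}` of `L(A)` (in the
reverse-inclusion order of `L(A)`, i.e. `{Y ∈ L(A) : X ⊆ Y}`). -/
noncomputable def principal (A : Finset (AffineSubspace K V)) (X : AffineSubspace K V) :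
    Finset (AffineSubspace K V) :=
  (poset A).filter fun Y => X ≤ Y

/-- The meet `X ∧ Y` in `L(A)`: the greatest element of `L(A)` below both `X` and `Y`
(in the reverse-inclusion order); in terms of affine subspaces it is the smallest
element of `L(A)` containing both `X` and `Y`.  In particular `X ∧ Y = 0̂` iff
`lmeet A X Y = ⊤`. -/
noncomputable def lmeet (A : Finset (AffineSubspace K V)) (X Y : AffineSubspace K V) :
    AffineSubspace K V :=
  sInf {W | W ∈ poset A ∧ X ≤ W ∧ Y ≤ W}

/-- An ideal decomposition `{I_1, …, I_m}` of `L(A)`: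
(I1) for every `X ∈ L(A) \ {0̂}` some `I j ∩ ⟨X⟩` is a nontrivial principal ideal;
(I2) joins `X_1 ∨ ⋯ ∨ X_m` (i.e. intersections) of members of the ideals exist;
(I3) these joins satisfy the rank condition. -/
def IsIdealDecomposition (A : Finset (AffineSubspace K V)) {m : ℕ}
    (I : Fin m → Finset (AffineSubspace K V)) : Prop :=
  (∀ i, IsIdeal A (I i)) ∧
  (∀ X ∈ poset A, X ≠ ⊤ →
    ∃ j, ∃ Z ∈ poset A, Z ≠ ⊤ ∧ I j ∩ principal A X = principal A Z) ∧
  (∀ f : Fin m → AffineSubspace K V, (∀ i, f i ∈ I i) →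
    Finset.univ.inf f ≠ (⊥ : AffineSubspace K V)) ∧
  (∀ f : Fin m → AffineSubspace K V, (∀ i, f i ∈ I i) →
    rk (Finset.univ.inf f) = ∑ i, rk (f i))

/-- The meet-complement `I^c = {Y ∈ L(A) : Y ∧ X = 0̂ for all X ∈ I}`. -/
noncomputable def meetCompl (A I : Finset (AffineSubspace K V)) : Finset (AffineSubspace K V) :=
  (poset A).filter fun Y => ∀ X ∈ I, lmeet A X Y = ⊤

/-- An ideal `I` is modular if `{I, I^c}` is an ideal decomposition of `L(A)`. -/
def IsModularIdeal (A I : Finset (AffineSubspace K V)) : Prop :=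
  IsIdealDecomposition A ![I, meetCompl A I]

/-- `μ` is the Möbius function `μ(0̂, ·)` of the finite intersection poset `P`
(ordered by reverse inclusion, with minimal element the maximal affine subspace in `P`):
the sum of `μ` over an interval `[0̂, X]` is `1` if `X = 0̂` and `0` otherwise. -/
def IsMobiusOn (P : Finset (AffineSubspace K V)) (μ : AffineSubspace K V → ℤ) : Prop :=
  ∀ X ∈ P, ∑ Z ∈ P.filter (fun Z => X ≤ Z), μ Z = if ∀ Z ∈ P, Z ≤ X then 1 else 0

/-- The characteristic polynomial `χ(t) = ∑_{X ∈ P} μ(X) t^{dim X}` of an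
intersection poset `P` with Möbius function `μ`. -/
noncomputable def charPolyOn (P : Finset (AffineSubspace K V)) (μ : AffineSubspace K V → ℤ) :
    Polynomial ℤ :=
  ∑ X ∈ P, C (μ X) * Polynomial.X ^ (Module.finrank K X.direction)

/-- The characteristic polynomial `χ̃(I, t) = ∑_{X ∈ I} μ(X) t^{r(I) - r(X)}` of an ideal. -/
noncomputable def tildeChi (μ : AffineSubspace K V → ℤ) (I : Finset (AffineSubspace K V)) :
    Polynomial ℤ :=
  ∑ X ∈ I, C (μ X) * Polynomial.X ^ (I.sup rk - rk X)

/-- A central arrangement: the intersection of all hyperplanes is nonempty. -/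
def IsCentral (A : Finset (AffineSubspace K V)) : Prop := A.inf id ≠ ⊥

/-- A modular element `Z ∈ L(A)`: `r(Z) + r(X) = r(Z ∧ X) + r(Z ∨ X)` for all `X ∈ L(A)`
(the join `Z ∨ X` being the intersection `Z ⊓ X` of affine subspaces). -/
def IsModularElement (A : Finset (AffineSubspace K V)) (Z : AffineSubspace K V) : Prop :=
  Z ∈ poset A ∧ ∀ X ∈ poset A, rk Z + rk X = rk (lmeet A Z X) + rk (Z ⊓ X)

/-- The intersection poset of the restriction `B^W = {H ∩ W : H ∈ B, H ∩ W ≠ ∅}`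
of the arrangement `B` to the affine subspace `W`, realized as a finset of affine
subspaces of the ambient space (with minimal element `W`). -/
noncomputable def tracePoset (B : Finset (AffineSubspace K V)) (W : AffineSubspace K V) :
    Finset (AffineSubspace K V) :=
  (((B.filter fun H => H ⊓ W ≠ ⊥).image fun H => H ⊓ W).powerset.image
      fun S => W ⊓ S.inf id).filter (· ≠ ⊥)

/-- A modular subarrangement `B ⊆ A`: `L(B)`, viewed as a subposet of `L(A)`,
is a modular ideal of `L(A)`. -/
def IsModularSub (A B : Finset (AffineSubspace K V)) : Prop :=
  B ⊆ A ∧ IsModularIdeal A (poset B)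

end HypArr

namespace HypArr

section AuxGeom

variable {K V : Type*} [Field K] [AddCommGroup V] [Module K V] [FiniteDimensional K V]

theorem aux_exists_mem {X : AffineSubspace K V} (h : X ≠ ⊥) : ∃ p, p ∈ X :=
  (AffineSubspace.nonempty_iff_ne_bot X).2 h

theorem aux_top_ne_bot : (⊤ : AffineSubspace K V) ≠ ⊥ := by
  rw [← AffineSubspace.nonempty_iff_ne_bot]
  exact ⟨0, AffineSubspace.mem_top K V 0⟩

theorem aux_ne_bot_of_le {X Y : AffineSubspace K V} (h : X ≤ Y) (hX : X ≠ ⊥) : Y ≠ ⊥ := by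
  intro hY
  exact hX (le_bot_iff.1 (hY ▸ h))

theorem mem_poset_iff {A : Finset (AffineSubspace K V)} {X : AffineSubspace K V} :
    X ∈ poset A ↔ (∃ S ⊆ A, S.inf id = X) ∧ X ≠ ⊥ := by
  unfold poset
  constructor
  · intro h
    rw [Finset.mem_filter] at h
    obtain ⟨h1, h2⟩ := h
    rw [Finset.mem_image] at h1
    obtain ⟨S, hS, hSinf⟩ := h1
    exact ⟨⟨S, Finset.mem_powerset.1 hS, hSinf⟩, h2⟩
  · rintro ⟨⟨S, hS, hSinf⟩, h2⟩
    rw [Finset.mem_filter]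
    exact ⟨Finset.mem_image.2 ⟨S, Finset.mem_powerset.2 hS, hSinf⟩, h2⟩

theorem top_mem_poset {A : Finset (AffineSubspace K V)} : (⊤ : AffineSubspace K V) ∈ poset A :=
  mem_poset_iff.2 ⟨⟨∅, Finset.empty_subset _, Finset.inf_empty⟩, aux_top_ne_bot⟩

theorem ne_bot_of_mem_poset {A : Finset (AffineSubspace K V)} {X : AffineSubspace K V}
    (h : X ∈ poset A) : X ≠ ⊥ := (mem_poset_iff.1 h).2

theorem inf_mem_poset {A : Finset (AffineSubspace K V)} {X Y : AffineSubspace K V}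
    (hX : X ∈ poset A) (hY : Y ∈ poset A) (h : X ⊓ Y ≠ ⊥) : X ⊓ Y ∈ poset A := by
  obtain ⟨⟨S, hS, hSinf⟩, -⟩ := mem_poset_iff.1 hX
  obtain ⟨⟨T, hT, hTinf⟩, -⟩ := mem_poset_iff.1 hY
  exact mem_poset_iff.2 ⟨⟨S ∪ T, Finset.union_subset hS hT, by
    rw [Finset.inf_union, hSinf, hTinf]⟩, h⟩

theorem hyperplane_mem_poset {A : Finset (AffineSubspace K V)} (hA : IsArrangement A)
    {H : AffineSubspace K V} (hH : H ∈ A) : H ∈ poset A :=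
  mem_poset_iff.2 ⟨⟨{H}, Finset.singleton_subset_iff.2 hH, Finset.inf_singleton⟩, (hA H hH).1⟩

theorem rk_top : rk (⊤ : AffineSubspace K V) = 0 := by
  unfold rk
  rw [AffineSubspace.direction_top]
  simp

theorem rk_hyperplane {A : Finset (AffineSubspace K V)} (hA : IsArrangement A)
    {H : AffineSubspace K V} (hH : H ∈ A) : rk H = 1 := by
  unfold rk
  have := (hA H hH).2
  omega

theorem rk_le_of_le {X Y : AffineSubspace K V} (h : X ≤ Y) : rk Y ≤ rk X := by
  unfold rk
  have := Submodule.finrank_mono (AffineSubspace.direction_le h)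
  omega

theorem eq_top_of_rk_eq_zero {X : AffineSubspace K V} (hX : X ≠ ⊥) (h : rk X = 0) : X = ⊤ := by
  unfold rk at h
  have h1 : Module.finrank K X.direction ≤ Module.finrank K V := Submodule.finrank_le _
  have h2 : Module.finrank K X.direction = Module.finrank K V := by omega
  have h3 : X.direction = ⊤ := Submodule.eq_top_of_finrank_eq h2
  obtain ⟨p, hp⟩ := aux_exists_mem hX
  exact (AffineSubspace.direction_eq_top_iff_of_nonempty ⟨p, hp⟩).1 h3

theorem one_le_rk {X : AffineSubspace K V} (hX : X ≠ ⊥) (h : X ≠ ⊤) : 1 ≤ rk X := by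
  by_contra hc
  exact h (eq_top_of_rk_eq_zero hX (by omega))

theorem rk_lt_of_lt {X Y : AffineSubspace K V} (h : X < Y) (hX : X ≠ ⊥) : rk Y < rk X := by
  have hle : X.direction ≤ Y.direction := AffineSubspace.direction_le h.le
  have hne : X.direction ≠ Y.direction := by
    intro he
    exact h.ne (AffineSubspace.eq_of_direction_eq_of_nonempty_of_le he
      ((AffineSubspace.nonempty_iff_ne_bot X).2 hX) h.le)
  have hlt : X.direction < Y.direction := lt_of_le_of_ne hle hne
  have h1 := Submodule.finrank_lt_finrank_of_lt hlt
  have h2 : Module.finrank K Y.direction ≤ Module.finrank K V := Submodule.finrank_le _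
  unfold rk
  omega

theorem eq_of_le_of_rk_le {X Y : AffineSubspace K V} (h : X ≤ Y) (hX : X ≠ ⊥)
    (hrk : rk X ≤ rk Y) : X = Y := by
  by_contra hne
  exact absurd hrk (not_le.2 (rk_lt_of_lt (lt_of_le_of_ne h hne) hX))

theorem rk_inf_le {X Y : AffineSubspace K V} (h : X ⊓ Y ≠ ⊥) :
    rk (X ⊓ Y) ≤ rk X + rk Y := by
  obtain ⟨p, hp⟩ := aux_exists_mem h
  have hdir := AffineSubspace.direction_inf_of_mem_inf hp
  have hkey := Submodule.finrank_sup_add_finrank_inf_eq X.direction Y.direction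
  have h1 : Module.finrank K ↥(X.direction ⊔ Y.direction) ≤ Module.finrank K V :=
    Submodule.finrank_le _
  have h2 : Module.finrank K X.direction ≤ Module.finrank K V := Submodule.finrank_le _
  have h3 : Module.finrank K Y.direction ≤ Module.finrank K V := Submodule.finrank_le _
  unfold rk
  rw [hdir]
  omega

/-- If `D` is below the direction of every member of `S` and `S.inf id` is nonempty,
then `D` is below the direction of `S.inf id`. -/
theorem le_direction_inf {D : Submodule K V} (S : Finset (AffineSubspace K V)) :
    S.inf id ≠ ⊥ → (∀ H ∈ S, D ≤ H.direction) → D ≤ (S.inf id).direction := by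
  classical
  induction S using Finset.induction_on with
  | empty =>
      intro _ _
      rw [Finset.inf_empty, AffineSubspace.direction_top]
      exact le_top
  | insert _ _ ha ih =>
      rename_i a S
      intro hne h
      rw [Finset.inf_insert, id_eq] at hne ⊢
      have hSne : S.inf id ≠ ⊥ := by
        intro hb
        rw [hb, inf_bot_eq] at hne
        exact hne rfl
      obtain ⟨p, hp⟩ := aux_exists_mem hne
      rw [AffineSubspace.direction_inf_of_mem_inf hp]
      exact le_inf (h a (Finset.mem_insert_self a S))
        (ih hSne fun H hH => h H (Finset.mem_insert_of_mem hH))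

/-- Going up one step towards `U` from `X`: there is a hyperplane through `U` cutting `X`
properly. -/
theorem cover_up {A : Finset (AffineSubspace K V)} (hA : IsArrangement A)
    {X U : AffineSubspace K V} (hXP : X ∈ poset A) (hUP : U ∈ poset A)
    (hle : U ≤ X) (hne : U ≠ X) :
    ∃ H ∈ A, U ≤ H ∧ X ⊓ H ∈ poset A ∧ rk (X ⊓ H) = rk X + 1 := by
  obtain ⟨⟨S, hSA, hSinf⟩, hUbot⟩ := mem_poset_iff.1 hUP
  have hex : ∃ H ∈ S, ¬ X ≤ H := by
    by_contra hc
    push_neg at hc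
    have : X ≤ S.inf id := Finset.le_inf fun H hH => hc H hH
    rw [hSinf] at this
    exact hne (le_antisymm hle this)
  obtain ⟨H, hHS, hXH⟩ := hex
  have hHA : H ∈ A := hSA hHS
  have hUH : U ≤ H := by
    rw [← hSinf]
    exact Finset.inf_le hHS
  have hUXH : U ≤ X ⊓ H := le_inf hle hUH
  have hXHbot : X ⊓ H ≠ ⊥ := aux_ne_bot_of_le hUXH hUbot
  have hXHP : X ⊓ H ∈ poset A := inf_mem_poset hXP (hyperplane_mem_poset hA hHA) hXHbot
  refine ⟨H, hHA, hUH, hXHP, ?_⟩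
  have hub : rk (X ⊓ H) ≤ rk X + 1 := by
    have := rk_inf_le hXHbot
    rw [rk_hyperplane hA hHA] at this
    exact this
  have hlt : X ⊓ H < X := lt_of_le_of_ne inf_le_left (fun he => hXH (inf_eq_left.1 he))
  have := rk_lt_of_lt hlt hXHbot
  omega

theorem interval_cover_aux {A : Finset (AffineSubspace K V)} (hA : IsArrangement A) :
    ∀ (d : ℕ) (X U : AffineSubspace K V), X ∈ poset A → U ∈ poset A → U ≤ X → U ≠ X →
      rk U ≤ rk X + d →
      ∃ U₀ ∈ poset A, ∃ H ∈ A, U ≤ U₀ ∧ U₀ ≤ X ∧ U ≤ H ∧ rk U₀ + 1 = rk U ∧ U₀ ⊓ H = U := by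
  intro d
  induction d with
  | zero =>
      intro X U hXP hUP hle hne hd
      have := rk_lt_of_lt (lt_of_le_of_ne hle hne) (ne_bot_of_mem_poset hUP)
      omega
  | succ d IH =>
      intro X U hXP hUP hle hne hd
      obtain ⟨H, hHA, hUH, hXHP, hXHrk⟩ := cover_up hA hXP hUP hle hne
      by_cases hcase : X ⊓ H = U
      · exact ⟨X, hXP, H, hHA, hle, le_rfl, hUH, by rw [← hcase, hXHrk], hcase⟩
      · have hUXH : U ≤ X ⊓ H := le_inf hle hUH
        obtain ⟨U₀, hU₀P, H', hH'A, h1, h2, h3, h4, h5⟩ :=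
          IH (X ⊓ H) U hXHP hUP hUXH (fun he => hcase he.symm) (by omega)
        exact ⟨U₀, hU₀P, H', hH'A, h1, h2.trans inf_le_left, h3, h4, h5⟩

theorem interval_cover {A : Finset (AffineSubspace K V)} (hA : IsArrangement A)
    {X U : AffineSubspace K V} (hXP : X ∈ poset A) (hUP : U ∈ poset A)
    (hle : U ≤ X) (hne : U ≠ X) :
    ∃ U₀ ∈ poset A, ∃ H ∈ A, U ≤ U₀ ∧ U₀ ≤ X ∧ U ≤ H ∧ rk U₀ + 1 = rk U ∧ U₀ ⊓ H = U :=
  interval_cover_aux hA (rk U) X U hXP hUP hle hne (by omega)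

end AuxGeom

section AuxPoset

variable {K V : Type*} [Field K] [AddCommGroup V] [Module K V] [FiniteDimensional K V]
variable {A I : Finset (AffineSubspace K V)}

theorem lmeet_eq_filter_inf (A : Finset (AffineSubspace K V)) (X Y : AffineSubspace K V) :
    lmeet A X Y = ((poset A).filter fun W => X ≤ W ∧ Y ≤ W).inf id := by
  unfold lmeet
  rw [Finset.inf_id_eq_sInf]
  congr 1
  ext W
  simp [Finset.mem_filter]

theorem le_lmeet_left (A : Finset (AffineSubspace K V)) (X Y : AffineSubspace K V) :
    X ≤ lmeet A X Y := by
  rw [lmeet_eq_filter_inf]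
  exact Finset.le_inf fun W hW => ((Finset.mem_filter.1 hW).2).1

theorem le_lmeet_right (A : Finset (AffineSubspace K V)) (X Y : AffineSubspace K V) :
    Y ≤ lmeet A X Y := by
  rw [lmeet_eq_filter_inf]
  exact Finset.le_inf fun W hW => ((Finset.mem_filter.1 hW).2).2

theorem lmeet_le {A : Finset (AffineSubspace K V)} {X Y Z : AffineSubspace K V}
    (hZ : Z ∈ poset A) (hX : X ≤ Z) (hY : Y ≤ Z) : lmeet A X Y ≤ Z := by
  rw [lmeet_eq_filter_inf]
  exact Finset.inf_le (Finset.mem_filter.2 ⟨hZ, hX, hY⟩)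

theorem inf_id_mem_poset_of_subset (S : Finset (AffineSubspace K V)) :
    (∀ W ∈ S, W ∈ poset A) → S.inf id ≠ ⊥ → S.inf id ∈ poset A := by
  classical
  induction S using Finset.induction_on with
  | empty =>
      intro _ _
      rw [Finset.inf_empty]
      exact top_mem_poset
  | insert _ _ ha ih =>
      rename_i a S
      intro hS hne
      rw [Finset.inf_insert, id_eq] at hne ⊢
      have hSne : S.inf id ≠ ⊥ := by
        intro hb
        rw [hb, inf_bot_eq] at hne
        exact hne rfl
      exact inf_mem_poset (hS a (Finset.mem_insert_self a S))
        (ih (fun W hW => hS W (Finset.mem_insert_of_mem hW)) hSne) hne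

theorem lmeet_mem_poset {A : Finset (AffineSubspace K V)} {X : AffineSubspace K V}
    (hX : X ∈ poset A) (Y : AffineSubspace K V) : lmeet A X Y ∈ poset A := by
  rw [lmeet_eq_filter_inf]
  apply inf_id_mem_poset_of_subset
  · intro W hW
    exact (Finset.mem_filter.1 hW).1
  · apply aux_ne_bot_of_le (Finset.le_inf fun W hW => ((Finset.mem_filter.1 hW).2).1)
      (ne_bot_of_mem_poset hX)

theorem mem_meetCompl_iff {W : AffineSubspace K V} :
    W ∈ meetCompl A I ↔ W ∈ poset A ∧ ∀ X ∈ I, lmeet A X W = ⊤ := Finset.mem_filter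

theorem top_mem_meetCompl : (⊤ : AffineSubspace K V) ∈ meetCompl A I :=
  mem_meetCompl_iff.2 ⟨top_mem_poset, fun X _ => top_unique (le_lmeet_right A X ⊤)⟩

theorem meetCompl_subset_poset : meetCompl A I ⊆ poset A := Finset.filter_subset _ _

theorem mem_principal {X Y : AffineSubspace K V} :
    Y ∈ principal A X ↔ Y ∈ poset A ∧ X ≤ Y := Finset.mem_filter

theorem principal_inter_spec {J : Finset (AffineSubspace K V)} {U Z : AffineSubspace K V}
    (hZP : Z ∈ poset A) (heq : J ∩ principal A U = principal A Z) :
    (Z ∈ J ∧ U ≤ Z) ∧ ∀ V', V' ∈ J → V' ∈ poset A → U ≤ V' → Z ≤ V' := by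
  constructor
  · have hz : Z ∈ principal A Z := mem_principal.2 ⟨hZP, le_rfl⟩
    rw [← heq] at hz
    have hz' := Finset.mem_inter.1 hz
    exact ⟨hz'.1, (mem_principal.1 hz'.2).2⟩
  · intro V' h1 h2 h3
    have : V' ∈ J ∩ principal A U := Finset.mem_inter.2 ⟨h1, mem_principal.2 ⟨h2, h3⟩⟩
    rw [heq] at this
    exact (mem_principal.1 this).2

theorem modular_ideal_isIdeal (hI : IsModularIdeal A I) : IsIdeal A I := by
  have := hI.1 0
  simpa using this

theorem modular_I1 (hI : IsModularIdeal A I) {U : AffineSubspace K V}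
    (hUP : U ∈ poset A) (hUtop : U ≠ ⊤) :
    ∃ Z ∈ poset A, Z ≠ ⊤ ∧ (I ∩ principal A U = principal A Z ∨
      meetCompl A I ∩ principal A U = principal A Z) := by
  obtain ⟨j, Z, hZP, hZtop, heq⟩ := hI.2.1 U hUP hUtop
  refine ⟨Z, hZP, hZtop, ?_⟩
  fin_cases j
  · left; simpa using heq
  · right; simpa using heq

theorem modular_pair (hI : IsModularIdeal A I) {X W : AffineSubspace K V}
    (hX : X ∈ I) (hW : W ∈ meetCompl A I) :
    X ⊓ W ≠ ⊥ ∧ rk (X ⊓ W) = rk X + rk W := by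
  set f : Fin 2 → AffineSubspace K V := ![X, W] with hf
  have hfmem : ∀ i, f i ∈ ![I, meetCompl A I] i := by
    intro i
    fin_cases i
    · simpa [hf] using hX
    · simpa [hf] using hW
  have huniv : Finset.univ.inf f = X ⊓ W := by
    apply le_antisymm
    · exact le_inf (Finset.inf_le (Finset.mem_univ 0)) (Finset.inf_le (Finset.mem_univ 1))
    · refine Finset.le_inf fun i _ => ?_
      fin_cases i
      · simpa [hf] using inf_le_left
      · simpa [hf] using inf_le_right
  have h2 := hI.2.2.1 f hfmem
  have h3 := hI.2.2.2 f hfmem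
  rw [huniv] at h2 h3
  refine ⟨h2, ?_⟩
  rw [h3, Fin.sum_univ_two]
  simp [hf]

/-- The "M-trick": if `W₁` covers `W₀ ∈ I^c` but is not itself in `I^c`, then the witness
produces an atom `M ∈ I` over `W₁` with `M ⊓ W₀ = W₁`. -/
theorem M_trick (hI : IsModularIdeal A I) {W₀ W₁ : AffineSubspace K V}
    (hW₀ : W₀ ∈ meetCompl A I) (hW₁P : W₁ ∈ poset A) (hW₁ : W₁ ∉ meetCompl A I)
    (hle : W₁ ≤ W₀) (hrk : rk W₁ = rk W₀ + 1) :
    ∃ M, M ∈ I ∧ M ∈ poset A ∧ rk M = 1 ∧ W₁ ≤ M ∧ M ⊓ W₀ = W₁ := by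
  have hIdeal := modular_ideal_isIdeal hI
  have hex : ∃ X' ∈ I, lmeet A X' W₁ ≠ ⊤ := by
    by_contra hc
    push_neg at hc
    exact hW₁ (mem_meetCompl_iff.2 ⟨hW₁P, hc⟩)
  obtain ⟨X', hX'I, hMtop⟩ := hex
  have hX'P : X' ∈ poset A := hIdeal.1 hX'I
  set M := lmeet A X' W₁ with hM
  have hMP : M ∈ poset A := lmeet_mem_poset hX'P W₁
  have hX'M : X' ≤ M := le_lmeet_left A X' W₁
  have hW₁M : W₁ ≤ M := le_lmeet_right A X' W₁
  have hMI : M ∈ I := hIdeal.2 X' hX'I M hMP hX'M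
  obtain ⟨hMW₀bot, hMW₀rk⟩ := modular_pair hI hMI hW₀
  have hW₁MW₀ : W₁ ≤ M ⊓ W₀ := le_inf hW₁M hle
  have hW₁bot : W₁ ≠ ⊥ := ne_bot_of_mem_poset hW₁P
  have hrk1 : rk (M ⊓ W₀) ≤ rk W₁ := rk_le_of_le hW₁MW₀
  have hMbot : M ≠ ⊥ := ne_bot_of_mem_poset hMP
  have hM1 : 1 ≤ rk M := one_le_rk hMbot hMtop
  have hrkM : rk M = 1 := by omega
  have heq : W₁ = M ⊓ W₀ := eq_of_le_of_rk_le hW₁MW₀ hW₁bot (by omega)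
  exact ⟨M, hMI, hMP, hrkM, hW₁M, heq.symm⟩

/-- **Key decomposition lemma.** If `X` is a maximal element of the modular ideal `I`
then every element of `L(A)` above `X` (i.e. contained in `X`) is the join of `X` and
an element of `I^c`, with ranks adding. -/
theorem claimG (hA : IsArrangement A) (hI : IsModularIdeal A I)
    {X : AffineSubspace K V} (hXI : X ∈ I) (hmax : ∀ Z ∈ I, Z ≤ X → Z = X) (hXtop : X ≠ ⊤) :
    ∀ U ∈ poset A, U ≤ X → ∃ W ∈ meetCompl A I, U = X ⊓ W ∧ rk U = rk X + rk W := by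
  have hIdeal := modular_ideal_isIdeal hI
  have hXP : X ∈ poset A := hIdeal.1 hXI
  suffices key : ∀ (d : ℕ) (U : AffineSubspace K V), U ∈ poset A → U ≤ X → rk U ≤ d →
      ∃ W ∈ meetCompl A I, U = X ⊓ W ∧ rk U = rk X + rk W by
    intro U hUP hle
    exact key (rk U) U hUP hle le_rfl
  intro d
  induction d with
  | zero =>
      intro U hUP hle hrk
      have hUtop : U = ⊤ := eq_top_of_rk_eq_zero (ne_bot_of_mem_poset hUP) (by omega)
      subst hUtop
      exact absurd (top_unique hle) hXtop
  | succ d IH =>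
      intro U hUP hle hrkU
      by_cases hUX : U = X
      · subst hUX
        refine ⟨⊤, top_mem_meetCompl, by rw [inf_top_eq], by simp [rk_top]⟩
      obtain ⟨U₀, hU₀P, H, hHA, hUU₀, hU₀X, hUH, hrkU₀, hU₀H⟩ :=
        interval_cover hA hXP hUP hle hUX
      obtain ⟨W₀, hW₀, hU₀eq, hU₀rk⟩ := IH U₀ hU₀P hU₀X (by omega)
      have hW₀P : W₀ ∈ poset A := meetCompl_subset_poset hW₀
      have hHP : H ∈ poset A := hyperplane_mem_poset hA hHA
      have hUbot : U ≠ ⊥ := ne_bot_of_mem_poset hUP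
      have hUW₀ : U ≤ W₀ := hUU₀.trans (by rw [hU₀eq]; exact inf_le_right)
      have hUtop : U ≠ ⊤ := by
        intro h
        rw [h, rk_top] at hrkU₀
        omega
      have hUW₁ : U ≤ W₀ ⊓ H := le_inf hUW₀ hUH
      have hW₁bot : W₀ ⊓ H ≠ ⊥ := aux_ne_bot_of_le hUW₁ hUbot
      have hW₁P : W₀ ⊓ H ∈ poset A := inf_mem_poset hW₀P hHP hW₁bot
      have hXW₁ : X ⊓ (W₀ ⊓ H) = U := by
        rw [← inf_assoc, ← hU₀eq, hU₀H]
      have hrkW₁ : rk (W₀ ⊓ H) = rk W₀ + 1 := by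
        have h1 : rk (W₀ ⊓ H) ≤ rk W₀ + rk H := rk_inf_le hW₁bot
        have h2 : rk H = 1 := rk_hyperplane hA hHA
        have h3 : rk (X ⊓ (W₀ ⊓ H)) ≤ rk X + rk (W₀ ⊓ H) := rk_inf_le (by rw [hXW₁]; exact hUbot)
        rw [hXW₁] at h3
        omega
      obtain ⟨Z, hZP, hZtop, hcase⟩ := modular_I1 hI hUP hUtop
      rcases hcase with hIU | hIcU
      · -- I ∩ ⟨U⟩ = ⟨Z⟩; maximality forces Z = X
        obtain ⟨⟨hZI, hUZ⟩, hgen⟩ := principal_inter_spec hZP hIU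
        have hZX : Z ≤ X := hgen X hXI hXP hle
        have hZeqX : Z = X := hmax Z hZI hZX
        rw [hZeqX] at hgen
        by_cases hW₁c : W₀ ⊓ H ∈ meetCompl A I
        · exact ⟨W₀ ⊓ H, hW₁c, hXW₁.symm, by omega⟩
        · exfalso
          obtain ⟨M, hMI, hMP, hrkM, hW₁M, hMW₀⟩ :=
            M_trick hI hW₀ hW₁P hW₁c inf_le_left hrkW₁
          have hXM : X ≤ M := hgen M hMI hMP (hUW₁.trans hW₁M)
          have hcontr : U = U₀ := by
            rw [← hXW₁, ← hMW₀, ← inf_assoc, inf_eq_left.2 hXM, hU₀eq]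
          rw [hcontr] at hrkU₀
          omega
      · -- I^c ∩ ⟨U⟩ = ⟨Z⟩
        obtain ⟨⟨hZIc, hUZ⟩, hgen⟩ := principal_inter_spec hZP hIcU
        have hZW₀ : Z ≤ W₀ := hgen W₀ hW₀ hW₀P hUW₀
        obtain ⟨hXZbot, hXZrk⟩ := modular_pair hI hXI hZIc
        have hUXZ : U ≤ X ⊓ Z := le_inf hle hUZ
        have hrkXZ : rk (X ⊓ Z) ≤ rk U := rk_le_of_le hUXZ
        by_cases hZbig : rk W₀ + 1 ≤ rk Z
        · have hUeq : U = X ⊓ Z := eq_of_le_of_rk_le hUXZ hUbot (by omega)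
          refine ⟨Z, hZIc, hUeq, ?_⟩
          rw [hUeq, hXZrk]
        · -- rk Z ≤ rk W₀, so Z = W₀
          have hZbot : Z ≠ ⊥ := ne_bot_of_mem_poset hZP
          have hZeqW₀ : Z = W₀ := eq_of_le_of_rk_le hZW₀ hZbot (by omega)
          rw [hZeqW₀] at hgen
          -- now I^c ∩ ⟨U⟩ = ⟨W₀⟩
          have hW₁c : W₀ ⊓ H ∉ meetCompl A I := by
            intro hc
            have h6 := hgen (W₀ ⊓ H) hc hW₁P hUW₁
            have h7 : W₀ ⊓ H = W₀ := le_antisymm inf_le_left h6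
            rw [h7] at hrkW₁
            omega
          obtain ⟨M, hMI, hMP, hrkM, hW₁M, hMW₀⟩ :=
            M_trick hI hW₀ hW₁P hW₁c inf_le_left hrkW₁
          have hMtop : M ≠ ⊤ := by
            intro h
            rw [h, rk_top] at hrkM
            omega
          have hUX₂ : U ≤ X ⊓ M := le_inf hle (hUW₁.trans hW₁M)
          have hX₂bot : X ⊓ M ≠ ⊥ := aux_ne_bot_of_le hUX₂ hUbot
          have hX₂P : X ⊓ M ∈ poset A := inf_mem_poset hXP hMP hX₂bot
          have hX₂top : X ⊓ M ≠ ⊤ := by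
            intro h
            have : (⊤ : AffineSubspace K V) ≤ M := h ▸ inf_le_right
            have : M = ⊤ := top_unique this
            rw [this, rk_top] at hrkM
            omega
          have hrkX₂ : rk (X ⊓ M) ≤ rk X + 1 := by
            have := rk_inf_le hX₂bot
            omega
          obtain ⟨Z', hZ'P, hZ'top, hcase'⟩ := modular_I1 hI hX₂P hX₂top
          rcases hcase' with hIX₂ | hIcX₂
          · -- I ∩ ⟨X₂⟩ = ⟨Z'⟩, maximality forces Z' = X, then X ≤ M
            obtain ⟨⟨hZ'I, hX₂Z'⟩, hgen'⟩ := principal_inter_spec hZ'P hIX₂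
            exfalso
            have hZ'X : Z' ≤ X := hgen' X hXI hXP inf_le_left
            have hZ'eqX : Z' = X := hmax Z' hZ'I hZ'X
            subst hZ'eqX
            have hXM := hgen' M hMI hMP inf_le_right
            have hcontr : U = U₀ := by
              rw [← hXW₁, ← hMW₀, ← inf_assoc, inf_eq_left.2 hXM, hU₀eq]
            rw [hcontr] at hrkU₀
            omega
          · -- I^c ∩ ⟨X₂⟩ = ⟨Z'⟩
            obtain ⟨⟨hZ'Ic, hX₂Z'⟩, hgen'⟩ := principal_inter_spec hZ'P hIcX₂
            have hUZ' : U ≤ Z' := hUX₂.trans hX₂Z'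
            have hW₀Z' : W₀ ≤ Z' := hgen Z' hZ'Ic hZ'P hUZ'
            obtain ⟨hXZ'bot, hXZ'rk⟩ := modular_pair hI hXI hZ'Ic
            have hX₂XZ' : X ⊓ M ≤ X ⊓ Z' := le_inf inf_le_left hX₂Z'
            have h5 : rk (X ⊓ Z') ≤ rk (X ⊓ M) := rk_le_of_le hX₂XZ'
            have hZ'bot : Z' ≠ ⊥ := ne_bot_of_mem_poset hZ'P
            have hZ'1 : 1 ≤ rk Z' := one_le_rk hZ'bot hZ'top
            have hX₂eq : X ⊓ M = X ⊓ Z' := eq_of_le_of_rk_le hX₂XZ' hX₂bot (by omega)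
            have hU₀X₂ : U₀ ≤ X ⊓ M := by
              rw [hX₂eq, hU₀eq]
              exact inf_le_inf_left X hW₀Z'
            have hU₀W₁ : U₀ ≤ W₀ ⊓ H := by
              rw [← hMW₀]
              exact le_inf (hU₀X₂.trans inf_le_right) (by rw [hU₀eq]; exact inf_le_right)
            have hU₀U : U₀ ≤ U := by
              rw [← hXW₁]
              exact le_inf (by rw [hU₀eq]; exact inf_le_left) hU₀W₁
            have hcontr : U = U₀ := le_antisymm hUU₀ hU₀U
            rw [hcontr] at hrkU₀
            omega

end AuxPoset

section MainProof

variable {K V : Type*} [Field K] [AddCommGroup V] [Module K V] [FiniteDimensional K V]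
variable {A I : Finset (AffineSubspace K V)}

theorem rk_le_of_max (hA : IsArrangement A) (hI : IsModularIdeal A I)
    {X Y : AffineSubspace K V} (hXI : X ∈ I) (hYI : Y ∈ I)
    (hmax : ∀ Z ∈ I, Z ≤ X → Z = X) : rk Y ≤ rk X := by
  have hIdeal := modular_ideal_isIdeal hI
  have hXP : X ∈ poset A := hIdeal.1 hXI
  have hYP : Y ∈ poset A := hIdeal.1 hYI
  by_cases hXtop : X = ⊤
  · have : Y = X := hmax Y hYI (by rw [hXtop]; exact le_top)
    rw [this]
  -- pick a maximal-rank element of the meet-complement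
  obtain ⟨Wm, hWm, hWmax⟩ := Finset.exists_max_image (meetCompl A I) rk
    ⟨⊤, top_mem_meetCompl⟩
  have hWmP : Wm ∈ poset A := meetCompl_subset_poset hWm
  obtain ⟨hXWbot, hXWrk⟩ := modular_pair hI hXI hWm
  obtain ⟨hYWbot, hYWrk⟩ := modular_pair hI hYI hWm
  -- direction of X ⊓ Wm is contained in direction of Y ⊓ Wm
  have hdir : (X ⊓ Wm).direction ≤ (Y ⊓ Wm).direction := by
    obtain ⟨q, hq⟩ := aux_exists_mem hYWbot
    rw [AffineSubspace.direction_inf_of_mem_inf hq]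
    refine le_inf ?_ (AffineSubspace.direction_le inf_le_right)
    -- show direction (X ⊓ Wm) ≤ direction of every hyperplane over Y
    obtain ⟨⟨S, hSA, hSinf⟩, hYbot⟩ := mem_poset_iff.1 hYP
    rw [← hSinf]
    apply le_direction_inf S (by rw [hSinf]; exact hYbot)
    intro H hHS
    have hHA : H ∈ A := hSA hHS
    by_cases hbot : (X ⊓ Wm) ⊓ H = ⊥
    · -- empty intersection: directions cannot span, so direction (X ⊓ Wm) ≤ direction H
      by_contra hnd
      have hHbot : H ≠ ⊥ := (hA H hHA).1
      have hlt : H.direction < (X ⊓ Wm).direction ⊔ H.direction :=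
        lt_of_le_of_ne le_sup_right (fun he => hnd (le_sup_left.trans_eq he.symm))
      have h1 := Submodule.finrank_lt_finrank_of_lt hlt
      have h2 : Module.finrank K ↥((X ⊓ Wm).direction ⊔ H.direction) ≤ Module.finrank K V :=
        Submodule.finrank_le _
      have h3 := (hA H hHA).2
      have h4 : Module.finrank K ↥((X ⊓ Wm).direction ⊔ H.direction) = Module.finrank K V := by
        omega
      have h5 : (X ⊓ Wm).direction ⊔ H.direction = ⊤ := Submodule.eq_top_of_finrank_eq h4
      obtain ⟨p, hp⟩ :=
        AffineSubspace.inter_nonempty_of_nonempty_of_sup_direction_eq_top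
          ((AffineSubspace.nonempty_iff_ne_bot _).2 hXWbot)
          ((AffineSubspace.nonempty_iff_ne_bot _).2 hHbot) h5
      have hne : (X ⊓ Wm) ⊓ H ≠ ⊥ := by
        rw [← AffineSubspace.nonempty_iff_ne_bot]
        exact ⟨p, hp⟩
      exact hne hbot
    · -- nonempty: use claimG to see (X ⊓ Wm) ⊓ H = X ⊓ Wm, i.e. X ⊓ Wm ≤ H
      have hXWP : X ⊓ Wm ∈ poset A := inf_mem_poset hXP hWmP hXWbot
      have hHP : H ∈ poset A := hyperplane_mem_poset hA hHA
      have hTP : (X ⊓ Wm) ⊓ H ∈ poset A := inf_mem_poset hXWP hHP hbot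
      have hTX : (X ⊓ Wm) ⊓ H ≤ X := inf_le_left.trans inf_le_left
      obtain ⟨W', hW', hTeq, hTrk⟩ := claimG hA hI hXI hmax hXtop _ hTP hTX
      have h1 : rk W' ≤ rk Wm := hWmax W' hW'
      have h2 : rk (X ⊓ Wm) ≤ rk ((X ⊓ Wm) ⊓ H) := rk_le_of_le inf_le_left
      have hTbot : (X ⊓ Wm) ⊓ H ≠ ⊥ := hbot
      have hEq : (X ⊓ Wm) ⊓ H = X ⊓ Wm := by
        apply eq_of_le_of_rk_le inf_le_left hTbot
        omega
      have : X ⊓ Wm ≤ H := by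
        rw [← hEq]
        exact inf_le_right
      exact AffineSubspace.direction_le this
  have hfr := Submodule.finrank_mono hdir
  have h2 : Module.finrank K (X ⊓ Wm).direction ≤ Module.finrank K V := Submodule.finrank_le _
  have h3 : Module.finrank K (Y ⊓ Wm).direction ≤ Module.finrank K V := Submodule.finrank_le _
  have hrkle : rk (Y ⊓ Wm) ≤ rk (X ⊓ Wm) := by
    unfold rk
    omega
  omega

end MainProof


/-- **Lemma.** Every modular ideal of `L(A)` is graded: all of its maximal elements
have the same rank.  (In the reverse-inclusion order of `L(A)`, `X` is maximal in `I`
iff every `Z ∈ I` with `Z ⊆ X` equals `X`.) -/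
theorem modularIdeal_graded
    {K V : Type*} [Field K] [AddCommGroup V] [Module K V] [FiniteDimensional K V]
    (A : Finset (AffineSubspace K V)) (hA : IsArrangement A)
    (I : Finset (AffineSubspace K V)) (hI : IsModularIdeal A I) :
    ∀ X ∈ I, ∀ Y ∈ I,
      (∀ Z ∈ I, Z ≤ X → Z = X) → (∀ Z ∈ I, Z ≤ Y → Z = Y) → rk X = rk Y := by
  intro X hXI Y hYI hmaxX hmaxY
  exact le_antisymm (rk_le_of_max hA hI hYI hXI hmaxY) (rk_le_of_max hA hI hXI hYI hmaxX)

end HypArr
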